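/- Let P : ℕ × ℕ → (ℕ → ℝ) satisfy the urn model I recurrence with positive weight sequences (α_n), (β_m): P(n,m)(k) = (α_n/(α_n+β_m))·P(n-1,m)(k) + (β_m/(α_n+β_m))·P(n,m-1)(k) for n,m ≥ 1, with P(n,0)(k) = δ_{k,n} and P(0,m)(k) = δ_{k,0}. Let Q satisfy the urn model II recurrence with weight sequences α̃_n = 1/α_n, β̃_m = 1/β_m: Q(n,m)(k) = (β̃_m/(α̃_n+β̃_m))·Q(n-1,m)(k) + (α̃_n/(α̃_n+β̃_m))·Q(n,m-1)(k) with the same boundary conditions. Then P(n,m)(k) = Q(n,m)(k) for all n, m, k. -/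

import Mathlib

/-- Duality between urn model I with weights `(α, β)` and urn model II with the
reciprocal weights `(1/α, 1/β)`. -/
theorem urn_duality (α β : ℕ → ℝ)
    (hα : ∀ i, 1 ≤ i → 0 < α i) (hβ : ∀ i, 1 ≤ i → 0 < β i)
    (P Q : ℕ → ℕ → ℕ → ℝ)
    (hPrec : ∀ n m k, 1 ≤ n → 1 ≤ m →
      P n m k = (α n / (α n + β m)) * P (n - 1) m k +
        (β m / (α n + β m)) * P n (m - 1) k)
    (hP0 : ∀ n k, P n 0 k = if k = n then 1 else 0)
    (hP0' : ∀ m k, 1 ≤ m → P 0 m k = if k = 0 then 1 else 0)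
    (hQrec : ∀ n m k, 1 ≤ n → 1 ≤ m →
      Q n m k = ((1 / β m) / (1 / α n + 1 / β m)) * Q (n - 1) m k +
        ((1 / α n) / (1 / α n + 1 / β m)) * Q n (m - 1) k)
    (hQ0 : ∀ n k, Q n 0 k = if k = n then 1 else 0)
    (hQ0' : ∀ m k, 1 ≤ m → Q 0 m k = if k = 0 then 1 else 0) :
    ∀ n m k, P n m k = Q n m k := by
  have key : ∀ s n m k, n + m ≤ s → P n m k = Q n m k := by
    intro s
    induction s with
    | zero =>
      intro n m k h
      have hn : n = 0 := by omega
      have hm : m = 0 := by omega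
      subst hn hm
      rw [hP0, hQ0]
    | succ s ih =>
      intro n m k h
      rcases Nat.eq_zero_or_pos m with hm | hm
      · subst hm; rw [hP0, hQ0]
      rcases Nat.eq_zero_or_pos n with hn | hn
      · subst hn; rw [hP0' m k hm, hQ0' m k hm]
      rw [hPrec n m k hn hm, hQrec n m k hn hm,
        ih (n-1) m k (by omega), ih n (m-1) k (by omega)]
      have ha := hα n hn
      have hb := hβ m hm
      have hab : α n + β m ≠ 0 := by positivity
      have h1 : (1 / β m) / (1 / α n + 1 / β m) = α n / (α n + β m) := by
        field_simp
        ring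
      have h2 : (1 / α n) / (1 / α n + 1 / β m) = β m / (α n + β m) := by
        field_simp
        exact add_comm _ _
      rw [h1, h2]
  intro n m k
  exact key (n + m) n m k le_rfl
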